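/- Let m ≥ 4 be an even module and let R and R̂ be nonempty sets of slots of module m. If s ∈ sc_{R,m}, f ∈ fl_{R̂,m}, and the match s @ f is defined, then: (i) R ∩ R̂ ≠ ∅, and (ii) for every a ∈ Σ, every restarting point of π_ã(f) is also a restarting point of π_ã(s). -/

import Mathlib

namespace Consensual

/-- The double alphabet `Σ̃ = Σ × Bool`: second component `true` means the letter is dotted. -/
abbrev DLetter (S : Type) := S × Bool

variable {S : Type} [DecidableEq S]

/-- Partial match of two letters of the double alphabet:
`a @ å = å @ a = a`, `å @ å = å`, undefined otherwise. -/
def matchLetter (x y : DLetter S) : Option (DLetter S) :=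
  if x.1 = y.1 ∧ (x.2 ∨ y.2) then some (x.1, x.2 && y.2) else none

/-- Letterwise partial match of two words over the double alphabet. -/
def matchWord : List (DLetter S) → List (DLetter S) → Option (List (DLetter S))
  | [], [] => some []
  | x :: xs, y :: ys => do
      let l ← matchLetter x y
      let rest ← matchWord xs ys
      pure (l :: rest)
  | _, _ => none

/-- Elementwise match of two languages over the double alphabet. -/
def matchLang (B C : Language (DLetter S)) : Language (DLetter S) :=
  { w | ∃ u ∈ B, ∃ v ∈ C, matchWord u v = some w }

/-- Iterated match `B^{i@}`. -/
def matchIter (B : Language (DLetter S)) : ℕ → Language (DLetter S)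
  | 0 => B
  | i + 1 => matchLang (matchIter B i) B

/-- Match closure `B^@ = ⋃ i, B^{i@}`. -/
def matchClosure (B : Language (DLetter S)) : Language (DLetter S) :=
  ⨆ i, matchIter B i

/-- The embedding of a word over `Σ` as an undotted word over `Σ̃`. -/
def undotWord (w : List S) : List (DLetter S) := w.map (fun a => (a, false))

/-- The consensual language `C(B) = B^@ ∩ Σ*` with base `B`, as a language over `Σ`. -/
def Cons (B : Language (DLetter S)) : Language S :=
  { w | undotWord w ∈ matchClosure B }

/-- A word consisting only of dotted letters. -/
def allDotted (w : List (DLetter S)) : Prop := ∀ l ∈ w, l.2 = true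

/-- `Σ̊*`, the language of all-dotted words (including ε). -/
def dottedStar : Language (DLetter S) := { w | allDotted w }

/-- `B ⊆ Σ̃* − Σ̊⁺`: no nonempty all-dotted word belongs to `B`. -/
def ProperBase (B : Language (DLetter S)) : Prop :=
  ∀ w ∈ B, w ≠ [] → ¬ allDotted w

/-- `B` is in decomposed form with scaffold `sc` and fill `fl`. -/
def IsDecomposed (B sc fl : Language (DLetter S)) : Prop :=
  ProperBase B ∧ B = sc ⊔ fl ∧ Disjoint sc fl ∧
    Cons fl = (⊥ : Language S) ∧ matchLang sc sc = (⊥ : Language (DLetter S))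

/-- Two decomposed bases `sc' ⊔ fl'` and `sc'' ⊔ fl''` are joinable. -/
def Joinable (sc' fl' sc'' fl'' : Language (DLetter S)) : Prop :=
  IsDecomposed ((sc' ⊔ fl') ⊔ (sc'' ⊔ fl'')) (sc' ⊔ sc'') (fl' ⊔ fl'') ∧
    matchLang sc' fl'' = (⊥ : Language (DLetter S)) ∧
    matchLang sc'' fl' = (⊥ : Language (DLetter S))

/-- `dot`: make every letter of a word dotted. -/
def dotWord (w : List (DLetter S)) : List (DLetter S) := w.map (fun l => (l.1, true))

/-- The dot-product `B' ⊙ B'' = (sc'·sc'') ⊔ fl' ⊔ fl''` of two decomposed bases. -/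
def dotProduct (sc' fl' sc'' fl'' : Language (DLetter S)) : Language (DLetter S) :=
  (sc' * sc'') ⊔ fl' ⊔ fl''

/-- Two decomposed bases `sc' ⊔ fl'` and `sc'' ⊔ fl''` are concatenable. -/
def Concatenable (sc' fl' sc'' fl'' : Language (DLetter S)) : Prop :=
  IsDecomposed (dotProduct sc' fl' sc'' fl'') (sc' * sc'') (fl' ⊔ fl'') ∧
  (∀ w' : List (DLetter S), w' ≠ [] → ∀ y' ∈ sc', ∀ y'' ∈ sc'',
    ((∃ x' ∈ fl', w' = x' ++ dotWord y'' ∧ (matchWord x' y').isSome) ↔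
      (w' ∈ fl' ∧ (matchWord w' (y' ++ y'')).isSome))) ∧
  (∀ w'' : List (DLetter S), w'' ≠ [] → ∀ y' ∈ sc', ∀ y'' ∈ sc'',
    ((∃ x'' ∈ fl'', w'' = dotWord y' ++ x'' ∧ (matchWord x'' y'').isSome) ↔
      (w'' ∈ fl'' ∧ (matchWord w'' (y' ++ y'')).isSome)))

/-! ### Slots, scaffolds and fills -/

/-- The word `å a^{r−1} å a^{m−r−1}`. -/
def slotWord (m r : ℕ) (a : S) : List (DLetter S) :=
  (a, true) :: (List.replicate (r - 1) (a, false) ++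
    (a, true) :: List.replicate (m - r - 1) (a, false))

/-- `R_m(a) = {å a^{r−1} å a^{m−r−1} : r ∈ R}`. -/
def Rm (m : ℕ) (R : Set ℕ) (a : S) : Language (DLetter S) :=
  { w | ∃ r ∈ R, w = slotWord m r a }

/-- Projection of a word over `Σ̃` on the two-letter alphabet `{a, å}`. -/
def projA (a : S) (x : List (DLetter S)) : List (DLetter S) :=
  x.filter (fun l => decide (l.1 = a))

/-- The scaffold language `sc_{R,m}`. -/
def scaffold (m : ℕ) (R : Set ℕ) : Language (DLetter S) :=
  { x | ∀ a : S, projA a x ∈ KStar.kstar (Rm m R a ⊔ {[(a, false)]}) }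

/-- `switch`: interchange `a` and `å` in every position. -/
def switchWord (w : List (DLetter S)) : List (DLetter S) := w.map (fun l => (l.1, !l.2))

/-- The fill language `fl_{R,m} = switch(sc_{R,m}) − Σ̊*`. -/
def fill (m : ℕ) (R : Set ℕ) : Language (DLetter S) :=
  { w | ∃ u ∈ scaffold (S := S) m R, w = switchWord u } \ dottedStar

/-- A language is shiftable if it absorbs all-dotted padding on both sides. -/
def Shiftable (F : Language (DLetter S)) : Prop :=
  F = dottedStar * F * dottedStar

/-- `R` is a set of slots of module `m`. -/
def SlotSet (m : ℕ) (R : Set ℕ) : Prop :=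
  4 ≤ m ∧ 2 ∣ m ∧ R.Nonempty ∧ ∀ r ∈ R, 1 ≤ r ∧ r ≤ m / 2 - 1

/-- The factor `α(i)…α(i+m−1)` of `α` (positions numbered from 1). -/
def factorAt (α : List (DLetter S)) (i m : ℕ) : List (DLetter S) :=
  (α.drop (i - 1)).take m

/-- `i` is a restarting point of `α ∈ π_ã(sc_{R,m})`. -/
def RestartScaffold (m : ℕ) (R : Set ℕ) (a : S) (α : List (DLetter S)) (i : ℕ) : Prop :=
  1 ≤ i ∧ i + m - 1 ≤ α.length ∧ factorAt α i m ∈ Rm m R a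

/-- `i` is a restarting point of `α ∈ π_ã(fl_{R̂,m})`. -/
def RestartFill (m : ℕ) (Rh : Set ℕ) (a : S) (α : List (DLetter S)) (i : ℕ) : Prop :=
  1 ≤ i ∧ i + m - 1 ≤ α.length ∧ (∃ u ∈ Rm m Rh a, factorAt α i m = switchWord u)

/-! ### Parikh images, COM-SLIP, and the family C(⊔,·) -/

/-- The Parikh image of a word. -/
def parikh (w : List S) : S → ℕ := fun a => w.count a

/-- A linear subset of `ℕ^Σ`. -/
def IsLinearSet (T : Set (S → ℕ)) : Prop :=
  ∃ (q : ℕ) (c : S → ℕ) (p : Fin q → S → ℕ),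
    T = { v | ∃ n : Fin q → ℕ, v = c + ∑ i, n i • p i }

/-- A semilinear subset of `ℕ^Σ`: a finite union of linear sets. -/
def IsSemilinearSet (T : Set (S → ℕ)) : Prop :=
  ∃ (t : ℕ) (f : Fin t → Set (S → ℕ)), (∀ i, IsLinearSet (f i)) ∧ T = ⋃ i, f i

/-- A commutative language: membership only depends on the Parikh image. -/
def CommutativeLang (L : Language S) : Prop :=
  ∀ w ∈ L, ∀ v : List S, parikh v = parikh w → v ∈ L

/-- A COM-SLIP language: commutative with semilinear Parikh image. -/
def IsComSlip (L : Language S) : Prop :=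
  CommutativeLang L ∧ IsSemilinearSet (parikh '' L)

/-- The family `C(⊔,·)`: the smallest family containing the COM-SLIP languages and
closed under binary union and concatenation. -/
inductive CUC {S : Type} [DecidableEq S] : Language S → Prop
  | base {L : Language S} : IsComSlip L → CUC L
  | union {L M : Language S} : CUC L → CUC M → CUC (L ⊔ M)
  | concat {L M : Language S} : CUC L → CUC M → CUC (L * M)

/-- Regular languages, via acceptance by a DFA with finitely many states. -/
def IsRegularLang {γ : Type} (B : Language γ) : Prop :=
  ∃ (σ : Type) (_ : Fintype σ) (M : DFA γ σ), M.accepts = B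

/-! ### Shuffle, appending, and the base `D` for a COM-LIP language -/

/-- `IsShuffle x y z`: `z` is an interleaving of `x` and `y`. -/
inductive IsShuffle {γ : Type} : List γ → List γ → List γ → Prop
  | nil : IsShuffle [] [] []
  | left {x : γ} {xs ys zs} : IsShuffle xs ys zs → IsShuffle (x :: xs) ys (x :: zs)
  | right {y : γ} {xs ys zs} : IsShuffle xs ys zs → IsShuffle xs (y :: ys) (y :: zs)

/-- The shuffle of two languages. -/
def shuffleLang {γ : Type} (L M : Language γ) : Language γ :=
  { z | ∃ x ∈ L, ∃ y ∈ M, IsShuffle x y z }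

/-- Split `w` as `u·v` where `v` is the longest suffix of `w` with no occurrence
of `a` or `å`; returns `(u, v)`. -/
def splitSuffix (a : S) (w : List (DLetter S)) : List (DLetter S) × List (DLetter S) :=
  ((w.reverse.dropWhile (fun l => decide (l.1 ≠ a))).reverse,
   (w.reverse.takeWhile (fun l => decide (l.1 ≠ a))).reverse)

/-- The append operation `B ◁ A` for `A ⊆ a⁺`. -/
def appendA (a : S) (B : Language (DLetter S)) (A : Language S) : Language (DLetter S) :=
  { w' | ∃ w ∈ B, ∃ s ∈ A, ∃ z, IsShuffle (splitSuffix a w).2 (undotWord s) z ∧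
      w' = (splitSuffix a w).1 ++ z }

/-- Projection of a language over `Σ` on the single letter `a`. -/
def projLetter (a : S) (F : Language S) : Language S :=
  { y | ∃ w ∈ F, y = w.filter (fun l => decide (l = a)) }

/-- Letter-by-letter appending `B ◁ F` (over the alphabet `Fin k`,
processing the letters `a₁, …, a_k` in order). -/
def lblAppend {k : ℕ} (B : Language (DLetter (Fin k))) (F : Language (Fin k)) :
    Language (DLetter (Fin k)) :=
  (List.finRange k).foldl (fun Bc a => appendA a Bc (projLetter a F)) B

/-- Projection of a word over `Σ̃` on the undotted letters. -/
def projSigma (x : List (DLetter S)) : List S :=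
  (x.filter (fun l => !l.2)).map Prod.fst

/-- The fill part `X` of the decomposed base for a COM-LIP language with periods `p`. -/
def Xlang {k q : ℕ} (m r : ℕ) (p : Fin q → Fin k → ℕ) : Language (DLetter (Fin k)) :=
  { x | x ∈ fill m {r} ∧ ∃ i : Fin q, parikh (projSigma x) = p i }

/-- `Y = (R_m(a₁))* ⧢ … ⧢ (R_m(a_k))*`. -/
def Ylang (k : ℕ) (m : ℕ) (R : Set ℕ) : Language (DLetter (Fin k)) :=
  (List.finRange k).foldl
    (fun acc a => shuffleLang acc (KStar.kstar (Rm m R a))) (1 : Language (DLetter (Fin k)))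

/-- The finite commutative language `W` with Parikh image
`{c + h₁p⁽¹⁾ + … + h_qp⁽q⁾ : 0 ≤ hⱼ < m/2}`. -/
def Wlang {k q : ℕ} (m : ℕ) (c : Fin k → ℕ) (p : Fin q → Fin k → ℕ) : Language (Fin k) :=
  { w | ∃ h : Fin q → ℕ, (∀ i, h i < m / 2) ∧ parikh w = c + ∑ i, h i • p i }

/-- The decomposed base `D = X ⊔ (Y ◁ W)` for a COM-LIP language. -/
def Dlang {k q : ℕ} (m r : ℕ) (c : Fin k → ℕ) (p : Fin q → Fin k → ℕ) :
    Language (DLetter (Fin k)) :=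
  Xlang m r p ⊔ lblAppend (Ylang k m {r}) (Wlang m c p)

/-- `matchListAll [x₁, …, x_n] = some u` iff `u = x₁ @ x₂ @ … @ x_n`. -/
def matchListAll : List (List (DLetter S)) → Option (List (DLetter S))
  | [] => none
  | [x] => some x
  | x :: xs => (matchListAll xs).bind (fun u => matchWord x u)


/-! ### Auxiliary lemmas for Statement 10 -/

set_option linter.unusedSectionVars false in
lemma slotWord_length' (m r : ℕ) (a : S) (h1 : 1 ≤ r) (h2 : r + 1 ≤ m) :
    (slotWord m r a).length = m := by
  simp [slotWord]; omega

set_option linter.unusedSectionVars false in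
lemma slotWord_getElem' (m r : ℕ) (a : S) (h1 : 1 ≤ r) (h2 : r + 1 ≤ m)
    (j : ℕ) (hj : j < (slotWord m r a).length) :
    (slotWord m r a)[j] = (a, decide (j = 0 ∨ j = r)) := by
  have hlen := slotWord_length' m r a h1 h2
  unfold slotWord
  rcases Nat.eq_zero_or_pos j with rfl | hj0
  · rfl
  · obtain ⟨j', rfl⟩ : ∃ j', j = j' + 1 := ⟨j - 1, by omega⟩
    change (List.replicate (r - 1) (a, false) ++ (a, true) :: List.replicate (m - r - 1) (a, false))[j']'(by simp only [List.length_append, List.length_cons, List.length_replicate]; omega) = _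
    by_cases hlt : j' < r - 1
    · rw [List.getElem_append_left (by simpa using hlt)]
      have hne : ¬(j' + 1 = 0 ∨ j' + 1 = r) := by omega
      simp [hne]; omega
    · rw [List.getElem_append_right (by simpa using hlt)]
      simp only [List.length_replicate]
      rcases Nat.eq_zero_or_pos (j' - (r - 1)) with h0 | hpos
      · have : j' + 1 = r := by omega
        simp only [h0, List.getElem_cons_zero, this]
        simp
      · obtain ⟨k, hk⟩ : ∃ k, j' - (r - 1) = k + 1 := ⟨j' - (r-1) - 1, by omega⟩
        have hne : ¬(j' + 1 = 0 ∨ j' + 1 = r) := by omega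
        simp only [hk, List.getElem_cons_succ, List.getElem_replicate]
        simp [hne]; omega

lemma matchLetter_isSome_iff (x y : DLetter S) :
    (matchLetter x y).isSome ↔ (x.1 = y.1 ∧ (x.2 = true ∨ y.2 = true)) := by
  by_cases h : x.1 = y.1 ∧ (x.2 ∨ y.2) <;> simp [matchLetter, h] <;> tauto

lemma matchWord_cons_isSome (x y : DLetter S) (xs ys : List (DLetter S)) :
    (matchWord (x :: xs) (y :: ys)).isSome ↔
      (matchLetter x y).isSome ∧ (matchWord xs ys).isSome := by
  cases h1 : matchLetter x y <;> cases h2 : matchWord xs ys <;>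
    simp [matchWord, h1, h2]

lemma matchWord_length' (x y : List (DLetter S)) (h : (matchWord x y).isSome) :
    x.length = y.length := by
  induction x generalizing y with
  | nil => cases y with
    | nil => rfl
    | cons b bs => simp [matchWord] at h
  | cons a as ih => cases y with
    | nil => simp [matchWord] at h
    | cons b bs =>
      rw [matchWord_cons_isSome] at h
      simp [ih bs h.2]

lemma matchWord_pointwise (x y : List (DLetter S)) (h : (matchWord x y).isSome)
    (j : ℕ) (hx : j < x.length) (hy : j < y.length) :
    x[j].1 = y[j].1 ∧ (x[j].2 = true ∨ y[j].2 = true) := by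
  induction x generalizing y j with
  | nil => simp at hx
  | cons a as ih => cases y with
    | nil => simp [matchWord] at h
    | cons b bs =>
      rw [matchWord_cons_isSome] at h
      cases j with
      | zero => simpa using (matchLetter_isSome_iff a b).mp h.1
      | succ j =>
        simpa using ih bs h.2 j (by simpa using hx) (by simpa using hy)

lemma matchWord_projA (a : S) (x y : List (DLetter S)) (h : (matchWord x y).isSome) :
    (matchWord (projA a x) (projA a y)).isSome := by
  induction x generalizing y with
  | nil => cases y with
    | nil => simp [projA, matchWord]
    | cons b bs => simp [matchWord] at h
  | cons c cs ih => cases y with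
    | nil => simp [matchWord] at h
    | cons b bs =>
      rw [matchWord_cons_isSome] at h
      have hfst : c.1 = b.1 := ((matchLetter_isSome_iff c b).mp h.1).1
      by_cases ha : c.1 = a
      · have hb : b.1 = a := hfst ▸ ha
        simp only [projA, List.filter_cons, ha, hb]
        rw [if_pos (by simp), if_pos (by simp), matchWord_cons_isSome]
        exact ⟨h.1, ih bs h.2⟩
      · have hb : ¬ b.1 = a := fun hh => ha (hfst.trans hh)
        simpa [projA, List.filter_cons, ha, hb] using ih bs h.2

set_option linter.unusedSectionVars false in
lemma scaffold_two_dots (m : ℕ) (R : Set ℕ) (a : S) (hm : 4 ≤ m) (hme : 2 ∣ m)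
    (hslots : ∀ r ∈ R, 1 ≤ r ∧ r ≤ m / 2 - 1)
    (L : List (List (DLetter S))) (hL : ∀ b ∈ L, b ∈ Rm m R a ∨ b = [(a, false)])
    (d e : ℕ) (hde : d < e) (he : e ≤ d + (m / 2 - 1))
    (helt : e < L.flatten.length)
    (hdd : (L.flatten[d]'(lt_of_le_of_lt (Nat.le_of_lt hde) helt)).2 = true)
    (hed : (L.flatten[e]'helt).2 = true) :
    d + m ≤ L.flatten.length ∧ (e - d) ∈ R ∧
      (L.flatten.drop d).take m = slotWord m (e - d) a := by
  induction L generalizing d e with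
  | nil => simp at helt
  | cons b L ih =>
    have hb := hL b (by simp)
    have hL' : ∀ c ∈ L, c ∈ Rm m R a ∨ c = [(a, false)] := fun c hc => hL c (by simp [hc])
    simp only [List.flatten_cons] at helt hdd hed ⊢
    rcases hb with ⟨r, hrR, rfl⟩ | rfl
    · -- slot block
      obtain ⟨hr1, hr2⟩ := hslots r hrR
      have hrm : r + 1 ≤ m := by omega
      have hlenb := slotWord_length' m r a hr1 hrm
      have hlen_app : (slotWord m r a ++ L.flatten).length = m + L.flatten.length := by
        simp [hlenb]
      by_cases hdm : d < m
      · have hd_lt : d < (slotWord m r a).length := by omega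
        have hdval : (slotWord m r a ++ L.flatten)[d]'(by omega) = (slotWord m r a)[d] :=
          List.getElem_append_left hd_lt
        rw [hdval, slotWord_getElem' m r a hr1 hrm d hd_lt] at hdd
        simp only [decide_eq_true_eq] at hdd
        rcases hdd with rfl | hdr
        · -- d = 0
          have he_lt : e < (slotWord m r a).length := by omega
          have heval : (slotWord m r a ++ L.flatten)[e]'(by omega) = (slotWord m r a)[e] :=
            List.getElem_append_left he_lt
          rw [heval, slotWord_getElem' m r a hr1 hrm e he_lt] at hed
          simp only [decide_eq_true_eq] at hed
          have her : e = r := by omega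
          subst her
          refine ⟨by omega, by simpa using hrR, ?_⟩
          rw [List.drop_zero, List.take_append]
          simp [hlenb]
        · -- d = r : contradiction
          exfalso
          have he_lt : e < (slotWord m r a).length := by omega
          have heval : (slotWord m r a ++ L.flatten)[e]'(by omega) = (slotWord m r a)[e] :=
            List.getElem_append_left he_lt
          rw [heval, slotWord_getElem' m r a hr1 hrm e he_lt] at hed
          simp only [decide_eq_true_eq] at hed
          omega
      · -- d ≥ m : recurse
        have hdge : (slotWord m r a).length ≤ d := by omega
        have hdval : (slotWord m r a ++ L.flatten)[d]'(by omega) =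
            L.flatten[d - m]'(by omega) := by
          rw [List.getElem_append_right hdge]; simp [hlenb]
        have hege : (slotWord m r a).length ≤ e := by omega
        have heval : (slotWord m r a ++ L.flatten)[e]'(by omega) =
            L.flatten[e - m]'(by omega) := by
          rw [List.getElem_append_right hege]; simp [hlenb]
        rw [hdval] at hdd
        rw [heval] at hed
        obtain ⟨h1, h2, h3⟩ := ih hL' (d - m) (e - m) (by omega) (by omega) (by omega)
          hdd hed
        have hdrop : (slotWord m r a ++ L.flatten).drop d = L.flatten.drop (d - m) := by
          rw [List.drop_append, List.drop_eq_nil_of_le (by omega)]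
          simp [hlenb]
        have hsub : e - d = (e - m) - (d - m) := by omega
        exact ⟨by omega, by rw [hsub]; exact h2, by rw [hdrop, hsub]; exact h3⟩
    · -- single undotted letter
      have hflen : ([((a : S), false)] ++ L.flatten).length = 1 + L.flatten.length := by
        simp [Nat.add_comm]
      rcases Nat.eq_zero_or_pos d with rfl | hd0
      · simp at hdd
      · have hdval : ([((a : S), false)] ++ L.flatten)[d]'(by omega) =
            L.flatten[d - 1]'(by omega) := by
          rw [List.getElem_append_right (by simp; omega)]; simp
        have heval : ([((a : S), false)] ++ L.flatten)[e]'helt =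
            L.flatten[e - 1]'(by omega) := by
          rw [List.getElem_append_right (by simp; omega)]; simp
        rw [hdval] at hdd
        rw [heval] at hed
        obtain ⟨h1, h2, h3⟩ := ih hL' (d - 1) (e - 1) (by omega) (by omega)
          (by omega) hdd hed
        have hdrop : ([((a : S), false)] ++ L.flatten).drop d = L.flatten.drop (d - 1) := by
          rw [List.drop_append, List.drop_eq_nil_of_le (by simp; omega)]
          simp
        have hsub : e - d = (e - 1) - (d - 1) := by omega
        refine ⟨by omega, by rw [hsub]; exact h2, by rw [hdrop, hsub]; exact h3⟩

set_option linter.unusedSectionVars false in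
lemma exists_slot_of_dot (m : ℕ) (R : Set ℕ) (a : S) (hm : 4 ≤ m)
    (hslots : ∀ r ∈ R, 1 ≤ r ∧ r ≤ m / 2 - 1)
    (L : List (List (DLetter S))) (hL : ∀ b ∈ L, b ∈ Rm m R a ∨ b = [(a, false)])
    (hdot : ∃ l ∈ L.flatten, l.2 = true) :
    ∃ d r, r ∈ R ∧ d + m ≤ L.flatten.length ∧
      (L.flatten.drop d).take m = slotWord m r a := by
  induction L with
  | nil => simp at hdot
  | cons b L ih =>
    rcases hL b (by simp) with ⟨r, hrR, rfl⟩ | rfl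
    · obtain ⟨hr1, hr2⟩ := hslots r hrR
      have hlenb := slotWord_length' m r a hr1 (by omega)
      have hlen : (slotWord m r a ++ L.flatten).length = m + L.flatten.length := by
        simp [hlenb]
      refine ⟨0, r, hrR, by rw [List.flatten_cons]; omega, ?_⟩
      rw [List.flatten_cons, List.drop_zero, List.take_append]
      simp [hlenb]
    · simp only [List.flatten_cons] at hdot ⊢
      have hflen : ([((a : S), false)] ++ L.flatten).length = 1 + L.flatten.length := by
        simp [Nat.add_comm]
      obtain ⟨l, hl, hl2⟩ := hdot
      rcases List.mem_append.mp hl with h | h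
      · simp at h; subst h; simp at hl2
      · obtain ⟨d, r, h1, h2, h3⟩ := ih (fun c hc => hL c (by simp [hc])) ⟨l, h, hl2⟩
        refine ⟨d + 1, r, h1, by omega, ?_⟩
        have hdrop : ([((a : S), false)] ++ L.flatten).drop (d + 1) = L.flatten.drop d := by
          rw [List.drop_append, List.drop_eq_nil_of_le (by simp)]
          simp
        rw [hdrop]; exact h3

lemma projA_switchWord (a : S) (u : List (DLetter S)) :
    projA a (switchWord u) = switchWord (projA a u) := by
  induction u with
  | nil => rfl
  | cons c cs ih =>
    simp only [switchWord, projA] at ih ⊢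
    by_cases h : c.1 = a <;> simp [List.filter_cons, h, ih]

set_option linter.unusedSectionVars false in
lemma switchWord_length (u : List (DLetter S)) : (switchWord u).length = u.length :=
  List.length_map ..

set_option linter.unusedSectionVars false in
lemma switchWord_getElem (u : List (DLetter S)) (j : ℕ) (hj : j < u.length) :
    (switchWord u)[j]'(by rw [switchWord_length]; exact hj) = (u[j].1, !u[j].2) :=
  List.getElem_map ..

set_option linter.unusedSectionVars false in
lemma switchWord_drop_take (u : List (DLetter S)) (d n : ℕ) :
    ((switchWord u).drop d).take n = switchWord ((u.drop d).take n) := by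
  simp [switchWord, List.map_drop, List.map_take]

set_option linter.unusedSectionVars false in
lemma getElem_factor (β : List (DLetter S)) (d n k : ℕ) (hk : k < n)
    (hlen : d + n ≤ β.length) :
    ((β.drop d).take n)[k]'(by simp; omega) = β[d + k]'(by omega) := by
  rw [List.getElem_take, List.getElem_drop]

lemma main_step (m : ℕ) (R Rh : Set ℕ)
    (hm : 4 ≤ m) (hme : 2 ∣ m)
    (hslots : ∀ r ∈ R, 1 ≤ r ∧ r ≤ m / 2 - 1)
    (hslotsh : ∀ r ∈ Rh, 1 ≤ r ∧ r ≤ m / 2 - 1)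
    (s f : List (DLetter S)) (hs : s ∈ scaffold m R)
    (hdef : (matchWord s f).isSome) (a : S) (i : ℕ)
    (hrf : RestartFill m Rh a (projA a f) i) :
    RestartScaffold m R a (projA a s) i ∧ (R ∩ Rh).Nonempty := by
  obtain ⟨hi1, hi2, u', hu', hfac⟩ := hrf
  obtain ⟨rh, hrhRh, rfl⟩ := hu'
  obtain ⟨hr1, hr2⟩ := hslotsh rh hrhRh
  have hmW : (matchWord (projA a s) (projA a f)).isSome := matchWord_projA a s f hdef
  have hlen := matchWord_length' _ _ hmW
  have hdm : (i - 1) + m ≤ (projA a f).length := by omega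
  have hfac' : ((projA a f).drop (i-1)).take m = switchWord (slotWord m rh a) := hfac
  have hslen : (slotWord m rh a).length = m := slotWord_length' m rh a hr1 (by omega)
  have hβval : ∀ k, ∀ hk : k < m, ((projA a f)[(i-1)+k]'(by omega)).2 =
      !decide (k = 0 ∨ k = rh) := by
    intro k hk
    have e0 : (((projA a f).drop (i-1)).take m)[k]'(by simp; omega) =
        (projA a f)[(i-1)+k]'(by omega) := getElem_factor _ (i-1) m k hk hdm
    have e1 : (((projA a f).drop (i-1)).take m)[k]'(by simp; omega) =
        (switchWord (slotWord m rh a))[k]'(by rw [switchWord_length, hslen]; exact hk) :=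
      List.getElem_of_eq hfac' _
    rw [← e0, e1, switchWord_getElem _ k (by rw [hslen]; exact hk),
      slotWord_getElem' m rh a hr1 (by omega) k (by rw [hslen]; exact hk)]
  have hβd : ((projA a f)[(i-1)]'(by omega)).2 = false := by
    have h := hβval 0 (by omega)
    simpa using h
  have hβe : ((projA a f)[(i-1)+rh]'(by omega)).2 = false := by
    have h := hβval rh (by omega)
    simpa using h
  have hαd : ((projA a s)[(i-1)]'(by omega)).2 = true := by
    rcases (matchWord_pointwise _ _ hmW (i-1) (by omega) (by omega)).2 with h | h
    · exact h
    · rw [hβd] at h; exact absurd h (by simp)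
  have hαe : ((projA a s)[(i-1)+rh]'(by omega)).2 = true := by
    rcases (matchWord_pointwise _ _ hmW ((i-1)+rh) (by omega) (by omega)).2 with h | h
    · exact h
    · rw [hβe] at h; exact absurd h (by simp)
  obtain ⟨L, hLeq, hLmem⟩ := Language.mem_kstar.mp (hs a)
  have hLor : ∀ b ∈ L, b ∈ Rm m R a ∨ b = [(a, false)] := fun b hb => hLmem b hb
  have hαlen : (projA a s).length = L.flatten.length := by rw [hLeq]
  have hdd : (L.flatten[(i-1)]'(by omega)).2 = true := by
    rw [← List.getElem_of_eq hLeq (by omega)]; exact hαd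
  have hed : (L.flatten[(i-1)+rh]'(by omega)).2 = true := by
    rw [← List.getElem_of_eq hLeq (by omega)]; exact hαe
  obtain ⟨h1, h2, h3⟩ := scaffold_two_dots m R a hm hme hslots L hLor (i-1) ((i-1)+rh)
    (by omega) (by omega) (by omega) hdd hed
  have hsub : ((i-1)+rh) - (i-1) = rh := by omega
  rw [hsub] at h2 h3
  refine ⟨⟨hi1, by omega, ?_⟩, ⟨rh, h2, hrhRh⟩⟩
  refine ⟨rh, h2, ?_⟩
  show ((projA a s).drop (i-1)).take m = slotWord m rh a
  rw [hLeq]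
  exact h3


/-- if `s ∈ sc_{R,m}`, `f ∈ fl_{R̂,m}` and `s @ f` is defined, then
`R ∩ R̂ ≠ ∅` and, for every letter `a`, every restarting point of `π_ã(f)` is a
restarting point of `π_ã(s)`. -/
theorem match_scaffold_fill_restart_points (m : ℕ) (R Rh : Set ℕ)
    (hm : 4 ≤ m) (hme : 2 ∣ m) (hR : R.Nonempty) (hRh : Rh.Nonempty)
    (hslots : ∀ r ∈ R, 1 ≤ r ∧ r ≤ m / 2 - 1)
    (hslotsh : ∀ r ∈ Rh, 1 ≤ r ∧ r ≤ m / 2 - 1)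
    (s f : List (DLetter S))
    (hs : s ∈ scaffold m R) (hf : f ∈ fill m Rh)
    (hdef : (matchWord s f).isSome) :
    (R ∩ Rh).Nonempty ∧
    (∀ a : S, ∀ i : ℕ,
      RestartFill m Rh a (projA a f) i → RestartScaffold m R a (projA a s) i) := by
  have hii : ∀ a i, RestartFill m Rh a (projA a f) i →
      RestartScaffold m R a (projA a s) i ∧ (R ∩ Rh).Nonempty :=
    fun a i h => main_step m R Rh hm hme hslots hslotsh s f hs hdef a i h
  constructor
  · obtain ⟨⟨u, hu, rfl⟩, hnd⟩ := hf
    have hex : ∃ l ∈ switchWord u, l.2 = false := by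
      by_contra hcon
      push_neg at hcon
      exact hnd (fun l hl => by
        have h := hcon l hl
        simpa using h)
    obtain ⟨l, hl, hl2⟩ := hex
    obtain ⟨p, hp, rfl⟩ := List.mem_map.mp hl
    have hp2 : p.2 = true := by simpa using hl2
    obtain ⟨L, hLeq, hLmem⟩ := Language.mem_kstar.mp (hu p.1)
    have hLor : ∀ b ∈ L, b ∈ Rm m Rh p.1 ∨ b = [(p.1, false)] := fun b hb => hLmem b hb
    have hdot : ∃ l ∈ L.flatten, l.2 = true := by
      refine ⟨p, ?_, hp2⟩
      rw [← hLeq]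
      exact List.mem_filter.mpr ⟨hp, by simp⟩
    obtain ⟨d, r, hrRh, hdm, hfacγ⟩ := exists_slot_of_dot m Rh p.1 hm hslotsh L hLor hdot
    have hγlen : (projA p.1 u).length = L.flatten.length := by rw [hLeq]
    have hRF : RestartFill m Rh p.1 (projA p.1 (switchWord u)) (d + 1) := by
      refine ⟨by omega, ?_, slotWord m r p.1, ⟨r, hrRh, rfl⟩, ?_⟩
      · rw [projA_switchWord, switchWord_length]
        omega
      · show factorAt (projA p.1 (switchWord u)) (d + 1) m = switchWord (slotWord m r p.1)
        rw [projA_switchWord]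
        unfold factorAt
        simp only [Nat.add_sub_cancel]
        rw [switchWord_drop_take, hLeq, hfacγ]
    exact (hii p.1 (d + 1) hRF).2
  · intro a i h
    exact (hii a i h).1

end Consensual
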